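/- Every cycle graph C_n (n ≥ 3) admits a 2-simultaneous interval representation, i.e., si(C_n) ≤ 2. -/
import Mathlib


/-- `(a, b, L)` is a `d`-simultaneous interval representation of `G`:
each vertex `v` gets a nonempty open interval `(a v, b v)` and a label set
`L v ⊆ {1,…,d}`, and distinct vertices are adjacent iff both their intervals
and their label sets intersect. -/
def IsSIRep {V : Type*} (G : SimpleGraph V) (d : ℕ)
    (a b : V → ℝ) (L : V → Finset (Fin d)) : Prop :=
  (∀ v, a v < b v) ∧
  ∀ u v : V, u ≠ v →
    (G.Adj u v ↔ (Set.Ioo (a u) (b u) ∩ Set.Ioo (a v) (b v)).Nonempty ∧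
      (L u ∩ L v).Nonempty)

/-- The simultaneous interval number of `G`. -/
noncomputable def si {V : Type*} (G : SimpleGraph V) : ℕ :=
  sInf {d | ∃ a b L, IsSIRep G d a b L}

lemma mod_aux {n i j : ℕ} (hn : 3 ≤ n) (hi : i < n) (hj : j < n) :
    (n - j + i) % n = 1 ↔ (i = j + 1 ∨ (j = n - 1 ∧ i = 0)) := by
  rcases le_or_gt j i with h | h
  · rw [show n - j + i = n + (i - j) by omega, Nat.add_mod_left,
      Nat.mod_eq_of_lt (by omega)]
    omega
  · rw [Nat.mod_eq_of_lt (by omega)]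
    omega

lemma interval_aux {n : ℕ} (hn : 3 ≤ n) {i j : ℕ} (hi : i < n) (hj : j < n) :
    ((if i = 0 then (-1 : ℝ) else (i : ℝ) - 1) ⊔ (if j = 0 then (-1 : ℝ) else (j : ℝ) - 1)
      < (if i = 0 then (n : ℝ) else (i : ℝ) + 1) ⊓ (if j = 0 then (n : ℝ) else (j : ℝ) + 1))
    ↔ (i = 0 ∨ j = 0 ∨ (i < j + 2 ∧ j < i + 2)) := by
  have hnr : (3 : ℝ) ≤ n := by exact_mod_cast hn
  have hir : (i : ℝ) < n := by exact_mod_cast hi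
  have hjr : (j : ℝ) < n := by exact_mod_cast hj
  rw [sup_lt_iff, lt_inf_iff, lt_inf_iff]
  split_ifs with h1 h2 h2
  · simp only [h1, true_or, iff_true]
    refine ⟨⟨by linarith, by linarith⟩, by linarith, by linarith⟩
  · simp only [h1, true_or, iff_true]
    refine ⟨⟨by linarith, by linarith⟩, by linarith, by linarith⟩
  · simp only [h2, true_or, or_true, iff_true]
    refine ⟨⟨by linarith, by linarith⟩, by linarith, by linarith⟩
  · have hi1 : 1 ≤ i := Nat.one_le_iff_ne_zero.mpr h1
    have hj1 : 1 ≤ j := Nat.one_le_iff_ne_zero.mpr h2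
    simp only [h1, h2, false_or]
    constructor
    · rintro ⟨⟨_, hb⟩, hc, _⟩
      constructor
      · have : (i : ℝ) < (j : ℝ) + 2 := by linarith
        exact_mod_cast this
      · have : (j : ℝ) < (i : ℝ) + 2 := by linarith
        exact_mod_cast this
    · rintro ⟨ha, hb⟩
      have har : (i : ℝ) < (j : ℝ) + 2 := by exact_mod_cast ha
      have hbr : (j : ℝ) < (i : ℝ) + 2 := by exact_mod_cast hb
      refine ⟨⟨by linarith, by linarith⟩, by linarith, by linarith⟩

lemma label_aux {n : ℕ} (hn : 3 ≤ n) {i j : ℕ} (hij : i ≠ j) :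
    (((if i = 0 then ({0} : Finset (Fin 2)) else if i = 1 ∨ i = n - 1 then {0, 1} else {1}) ∩
      (if j = 0 then ({0} : Finset (Fin 2)) else if j = 1 ∨ j = n - 1 then {0, 1} else {1})).Nonempty)
    ↔ ((i = 0 → (j = 1 ∨ j = n - 1)) ∧ (j = 0 → (i = 1 ∨ i = n - 1))) := by
  split_ifs with h1 h2 h3 h3 h2 h4 h4 h4 <;>
    simp_all <;> first | decide | omega

/-- Every cycle `C_n` with `n ≥ 3` has simultaneous interval number at most 2. -/
theorem si_cycleGraph_le_two (n : ℕ) (hn : 3 ≤ n) :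
    si (SimpleGraph.cycleGraph n) ≤ 2 := by
  apply Nat.sInf_le
  refine ⟨fun v => if (v : Fin n).val = 0 then (-1 : ℝ) else (v.val : ℝ) - 1,
    fun v => if (v : Fin n).val = 0 then (n : ℝ) else (v.val : ℝ) + 1,
    fun v => if (v : Fin n).val = 0 then ({0} : Finset (Fin 2))
      else if v.val = 1 ∨ v.val = n - 1 then {0, 1} else {1}, ?_, ?_⟩
  · intro v
    have hnr : (3 : ℝ) ≤ n := by exact_mod_cast hn
    dsimp only
    split_ifs with h
    · linarith
    · linarith
  · intro u v huv
    have hi := u.isLt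
    have hj := v.isLt
    have hne : u.val ≠ v.val := fun h => huv (Fin.ext h)
    dsimp only
    rw [SimpleGraph.cycleGraph_adj', Fin.sub_def, Fin.sub_def]
    simp only [Fin.val_mk]
    rw [mod_aux hn hi hj, mod_aux hn hj hi,
      Set.Ioo_inter_Ioo, Set.nonempty_Ioo, interval_aux hn hi hj, label_aux hn hne]
    omega
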